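/- Let L be an irreducible generator matrix with detailed balance with respect to positive π, with A, B disjoint nonempty subsets. Then the committor q (q=0 on A, q=1 on B, ∑_j L_{ij} q_j = 0 for i ∉ A∪B) satisfies 0 ≤ q_i ≤ 1 for all i (maximum principle for the committor). -/

import Mathlib

/-- Helper: minimum principle. If `q = 0` on nonempty `A`, `q = 1` on `B`, and `q`
is harmonic off `A ∪ B`, then `q ≥ 0` everywhere. -/
lemma committor_min_principle
    (N : ℕ) (L : Matrix (Fin N) (Fin N) ℝ)
    (hoff : ∀ i j, i ≠ j → 0 ≤ L i j)
    (hrow : ∀ i, ∑ j, L i j = 0)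
    (hirr : ∀ i j : Fin N,
      Relation.ReflTransGen (fun a b => a ≠ b ∧ 0 < L a b) i j)
    (A B : Finset (Fin N))
    (hA : A.Nonempty)
    (q : Fin N → ℝ)
    (hqA : ∀ i ∈ A, q i = 0) (hqB : ∀ i ∈ B, q i = 1)
    (hharm : ∀ i, i ∉ A → i ∉ B → ∑ j, L i j * q j = 0) :
    ∀ i, 0 ≤ q i := by
  by_contra h
  push_neg at h
  obtain ⟨i, hi⟩ := h
  have huniv : (Finset.univ : Finset (Fin N)).Nonempty := ⟨i, Finset.mem_univ i⟩
  obtain ⟨i0, -, hmin⟩ := Finset.exists_min_image Finset.univ q huniv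
  have hmin' : ∀ j, q i0 ≤ q j := fun j => hmin j (Finset.mem_univ j)
  set m := q i0 with hm
  have hmneg : m < 0 := lt_of_le_of_lt (hmin' i) hi
  -- propagate the minimum along paths
  have claim : ∀ j, Relation.ReflTransGen (fun a b => a ≠ b ∧ 0 < L a b) i0 j →
      q j = m := by
    intro j h
    induction h with
    | refl => rfl
    | tail hcb hedge ih =>
      rename_i c b
      have hcA : c ∉ A := fun hc => by
        have := hqA c hc; rw [ih] at this; exact absurd this (ne_of_lt hmneg)
      have hcB : c ∉ B := fun hc => by
        have := hqB c hc; rw [ih] at this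
        exact absurd this (ne_of_lt (lt_trans hmneg one_pos))
      have hh := hharm c hcA hcB
      have hr := hrow c
      have hsum : ∑ k, L c k * (q k - m) = 0 := by
        have : ∑ k, L c k * (q k - m) = (∑ k, L c k * q k) - (∑ k, L c k) * m := by
          rw [Finset.sum_mul]
          rw [← Finset.sum_sub_distrib]
          congr 1; ext k; ring
        rw [this, hh, hr, zero_mul, sub_zero]
      have hnn : ∀ k ∈ Finset.univ, 0 ≤ L c k * (q k - m) := by
        intro k _
        rcases eq_or_ne k c with rfl | hkc
        · rw [ih, sub_self, mul_zero]
        · exact mul_nonneg (hoff c k (Ne.symm hkc)) (sub_nonneg.mpr (hmin' k))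
      have hzero := (Finset.sum_eq_zero_iff_of_nonneg hnn).mp hsum
      have hb := hzero b (Finset.mem_univ b)
      have hLcb : L c b ≠ 0 := ne_of_gt hedge.2
      have : q b - m = 0 := by
        rcases mul_eq_zero.mp hb with h' | h'
        · exact absurd h' hLcb
        · exact h'
      linarith
  obtain ⟨a, ha⟩ := hA
  have := claim a (hirr i0 a)
  rw [hqA a ha] at this
  exact absurd this.symm (ne_of_lt hmneg)

/-- Maximum principle for the committor: for an irreducible generator matrix with
detailed balance, the committor `q` (with `q = 0` on `A`, `q = 1` on `B`, harmonic
elsewhere) satisfies `0 ≤ q i ≤ 1` for all states `i`. -/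
theorem committor_maximum_principle
    (N : ℕ) (L : Matrix (Fin N) (Fin N) ℝ) (π : Fin N → ℝ)
    (hπpos : ∀ i, 0 < π i) (hπsum : ∑ i, π i = 1)
    (hoff : ∀ i j, i ≠ j → 0 ≤ L i j)
    (hrow : ∀ i, ∑ j, L i j = 0)
    (hdb : ∀ i j, π i * L i j = π j * L j i)
    (hirr : ∀ i j : Fin N,
      Relation.ReflTransGen (fun a b => a ≠ b ∧ 0 < L a b) i j)
    (A B : Finset (Fin N)) (hA : A.Nonempty) (hB : B.Nonempty)
    (hAB : Disjoint A B)
    (q : Fin N → ℝ)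
    (hqA : ∀ i ∈ A, q i = 0) (hqB : ∀ i ∈ B, q i = 1)
    (hharm : ∀ i, i ∉ A → i ∉ B → ∑ j, L i j * q j = 0) :
    ∀ i, 0 ≤ q i ∧ q i ≤ 1 := by
  intro i
  constructor
  · exact committor_min_principle N L hoff hrow hirr A B hA q hqA hqB hharm i
  · have h2 := committor_min_principle N L hoff hrow hirr B A hB (fun k => 1 - q k)
      (fun k hk => by rw [hqB k hk]; ring)
      (fun k hk => by rw [hqA k hk]; ring)
      (fun k hkB hkA => by
        have := hharm k hkA hkB
        have hr := hrow k
        have : ∑ j, L k j * (1 - q j) = (∑ j, L k j) - ∑ j, L k j * q j := by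
          rw [← Finset.sum_sub_distrib]; congr 1; ext j; ring
        rw [this, hr, hharm k hkA hkB, sub_zero])
    have := h2 i; linarith
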